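/- Let (X_k) be a sequence of nonempty metric spaces and let Y be a nonempty metric space such that d̂(X_k, Y) → 0 as k → ∞. Then there exist base points p_k ∈ X_k and p ∈ Y such that (X_k, p_k) converges to (Y, p) in the pointed Gromov–Hausdorff sense: for every r > 0 and ε > 0 there exists n_0 such that for each n > n_0 there is a (not necessarily continuous) map f from the open ball U_r(p_n) ⊆ X_n to Y with (1) f(p_n) = p; (2) |d(x,x') − d(f(x), f(x'))| < ε for all x, x' ∈ U_r(p_n); and (3) every point of the open ball U_{r−ε}(p) ⊆ Y lies within distance < ε of some point of f(U_r(p_n)). -/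
import Mathlib


open ENNReal

/-- `f` is an `(A,B)`-quasi-isometric embedding. -/
def QIEmb {X Y : Type*} [MetricSpace X] [MetricSpace Y] (A B : ℝ) (f : X → Y) : Prop :=
  ∀ x x' : X, (1 / A) * dist x x' - B ≤ dist (f x) (f x') ∧
    dist (f x) (f x') ≤ A * dist x x' + B

/-- `X` and `Y` are `(A,B,C)`-quasi-isometric. -/
def QuasiIsometric (X Y : Type*) [MetricSpace X] [MetricSpace Y] (A B C : ℝ) : Prop :=
  ∃ (f : X → Y) (g : Y → X), QIEmb A B f ∧ QIEmb A B g ∧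
    (∀ x : X, dist (g (f x)) x ≤ C) ∧ (∀ y : Y, dist (f (g y)) y ≤ C)

/-- The quasi-isometric distance `d̂`. -/
noncomputable def qiDist (X Y : Type*) [MetricSpace X] [MetricSpace Y] : ℝ≥0∞ :=
  sInf {e : ℝ≥0∞ | ∃ r : ℝ, 0 < r ∧ e = ENNReal.ofReal r ∧ QuasiIsometric X Y (1 + r) r r}

open Filter

set_option maxHeartbeats 1000000 in
/-- Quasi-isometric convergence implies pointed Gromov–Hausdorff convergence. -/
theorem qi_convergence_implies_pointed_GH_convergence
    (X : ℕ → Type*) [∀ k, MetricSpace (X k)] [∀ k, Nonempty (X k)]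
    (Y : Type*) [MetricSpace Y] [Nonempty Y]
    (hconv : Tendsto (fun k => qiDist (X k) Y) atTop (nhds 0)) :
    ∃ (p : ∀ k, X k) (p₀ : Y),
      ∀ r > (0 : ℝ), ∀ ε > (0 : ℝ), ∃ n₀ : ℕ, ∀ n > n₀,
        ∃ f : ↥(Metric.ball (p n) r) → Y,
          (∀ x : ↥(Metric.ball (p n) r), (x : X n) = p n → f x = p₀) ∧
          (∀ x x' : ↥(Metric.ball (p n) r),
            |dist (x : X n) (x' : X n) - dist (f x) (f x')| < ε) ∧
          (∀ y ∈ Metric.ball p₀ (r - ε), ∃ x : ↥(Metric.ball (p n) r), dist y (f x) < ε) := by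
  classical
  set p₀ : Y := Classical.arbitrary Y with hp₀
  -- Step 1: for each k with finite qiDist, choose near-optimal quasi-isometry data.
  have key : ∀ k, ∃ (c : ℝ) (F : X k → Y) (G : Y → X k),
      qiDist (X k) Y ≠ ⊤ →
      0 < c ∧ QIEmb (1 + c) c F ∧ QIEmb (1 + c) c G ∧
      (∀ x, dist (G (F x)) x ≤ c) ∧ (∀ y, dist (F (G y)) y ≤ c) ∧
      ENNReal.ofReal c < qiDist (X k) Y + ENNReal.ofReal (1 / (k + 1)) := by
    intro k
    by_cases h : qiDist (X k) Y = ⊤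
    · exact ⟨0, fun _ => Classical.arbitrary Y, fun _ => Classical.arbitrary (X k),
        fun h' => absurd h h'⟩
    · have hpos : ENNReal.ofReal (1 / (k + 1 : ℝ)) ≠ 0 :=
        (ENNReal.ofReal_pos.mpr (by positivity)).ne'
      have hlt : qiDist (X k) Y < qiDist (X k) Y + ENNReal.ofReal (1 / (k + 1)) :=
        ENNReal.lt_add_right h hpos
      have hlt' : sInf {e : ℝ≥0∞ | ∃ r : ℝ, 0 < r ∧ e = ENNReal.ofReal r ∧
          QuasiIsometric (X k) Y (1 + r) r r} <
          qiDist (X k) Y + ENNReal.ofReal (1 / (k + 1)) := hlt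
      obtain ⟨e, ⟨c, hc0, rfl, hQI⟩, helt⟩ := sInf_lt_iff.mp hlt'
      obtain ⟨F, G, hF, hG, hgf, hfg⟩ := hQI
      exact ⟨c, F, G, fun _ => ⟨hc0, hF, hG, hgf, hfg, helt⟩⟩
  choose c F G hkey using key
  refine ⟨fun k => G k p₀, p₀, ?_⟩
  intro r hr ε hε
  set δ := min 1 (min (ε / (4 * r + 5)) (min (ε / (r + 1)) (ε / 2))) with hδdef
  have hδ : 0 < δ := by
    refine lt_min one_pos (lt_min (by positivity) (lt_min (by positivity) (by positivity)))
  -- eventual bounds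
  have hev1 : ∀ᶠ n in atTop, qiDist (X n) Y ≤ ENNReal.ofReal (δ / 2) :=
    ENNReal.tendsto_nhds_zero.mp hconv _ (by simp [ENNReal.ofReal_pos]; positivity)
  have hev2 : ∀ᶠ n : ℕ in atTop, (1 : ℝ) / (n + 1) ≤ δ / 2 :=
    tendsto_one_div_add_atTop_nhds_zero_nat.eventually (eventually_le_nhds (by positivity))
  obtain ⟨n₀, hn₀⟩ := eventually_atTop.mp (hev1.and hev2)
  refine ⟨n₀, ?_⟩
  intro n hn
  obtain ⟨hq, h1n⟩ := hn₀ n (le_of_lt hn)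
  have hfin : qiDist (X n) Y ≠ ⊤ := ne_top_of_le_ne_top ENNReal.ofReal_ne_top hq
  obtain ⟨hc0, hF, hG, hgf, hfg, hcb⟩ := hkey n hfin
  have hcδ : c n < δ := by
    have h2 : ENNReal.ofReal (c n) < ENNReal.ofReal (δ / 2) + ENNReal.ofReal (δ / 2) :=
      lt_of_lt_of_le hcb (add_le_add hq (ENNReal.ofReal_le_ofReal h1n))
    rw [← ENNReal.ofReal_add (by positivity) (by positivity)] at h2
    have h3 := (ENNReal.ofReal_lt_ofReal_iff (by positivity)).mp h2
    linarith
  have hc1 : c n < 1 := lt_of_lt_of_le hcδ (min_le_left _ _)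
  have hc2 : c n < ε / (4 * r + 5) :=
    lt_of_lt_of_le hcδ (le_trans (min_le_right _ _) (min_le_left _ _))
  have hc3 : c n < ε / (r + 1) :=
    lt_of_lt_of_le hcδ (le_trans (min_le_right _ _)
      (le_trans (min_le_right _ _) (min_le_left _ _)))
  have hc4 : c n < ε / 2 :=
    lt_of_lt_of_le hcδ (le_trans (min_le_right _ _)
      (le_trans (min_le_right _ _) (min_le_right _ _)))
  have h1c : (0 : ℝ) < 1 + c n := by linarith
  -- the map
  refine ⟨fun x => if (x : X n) = G n p₀ then p₀ else F n x, ?_, ?_, ?_⟩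
  · intro x hx
    exact if_pos hx
  · intro x x'
    have hx : dist (x : X n) (G n p₀) < r := Metric.mem_ball.mp x.2
    have hx' : dist (x' : X n) (G n p₀) < r := Metric.mem_ball.mp x'.2
    have hd : dist (x : X n) (x' : X n) ≤ 2 * r := by
      have ht := dist_triangle (x : X n) (G n p₀) (x' : X n)
      have hcomm : dist (G n p₀) (x' : X n) = dist (x' : X n) (G n p₀) := dist_comm _ _
      linarith
    set d := dist (x : X n) (x' : X n) with hdd
    set e := dist (F n x) (F n x') with hee
    have hd0 : 0 ≤ d := dist_nonneg
    have he0 : 0 ≤ e := dist_nonneg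
    obtain ⟨hlo, hup⟩ := hF (x : X n) (x' : X n)
    rw [← hdd, ← hee] at hlo hup
    have hlo2 : d ≤ (e + c n) * (1 + c n) := by
      have h4 : d / (1 + c n) ≤ e + c n := by
        rw [div_eq_mul_inv, mul_comm, ← one_div]
        linarith [hlo]
      exact (div_le_iff₀ h1c).mp h4
    have hEe : |d - e| ≤ c n * (4 * r + 3) := by
      rw [abs_le]
      have hcd : c n * d ≤ c n * (2 * r) := mul_le_mul_of_nonneg_left hd hc0.le
      have hce : c n * e ≤ c n * ((1 + c n) * d + c n) := mul_le_mul_of_nonneg_left hup hc0.le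
      have hcc : c n * c n ≤ c n := by nlinarith
      constructor
      · nlinarith [hup, hd, hc0, hc1, hcd]
      · nlinarith [hlo2, hup, hd, hc0, hc1, he0, hcd, hce, hcc]
    -- deviation of f from F
    have hfF : ∀ z : ↥(Metric.ball ((fun k => G k p₀) n) r),
        dist (if (z : X n) = G n p₀ then p₀ else F n z) (F n z) ≤ c n := by
      intro z
      by_cases h : (z : X n) = G n p₀
      · rw [if_pos h, h, dist_comm]
        exact hfg p₀
      · rw [if_neg h, dist_self]
        exact le_of_lt hc0
    have hdd1 := hfF x
    have hdd2 := hfF x'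
    have htri : |dist (if (x : X n) = G n p₀ then p₀ else F n x)
        (if (x' : X n) = G n p₀ then p₀ else F n x') - e| ≤
        dist (if (x : X n) = G n p₀ then p₀ else F n x) (F n x) +
        dist (if (x' : X n) = G n p₀ then p₀ else F n x') (F n x') := by
      have := dist_dist_dist_le (if (x : X n) = G n p₀ then p₀ else F n x)
        (if (x' : X n) = G n p₀ then p₀ else F n x') (F n x) (F n x')
      rwa [Real.dist_eq] at this
    have habs : |d - dist (if (x : X n) = G n p₀ then p₀ else F n x)
        (if (x' : X n) = G n p₀ then p₀ else F n x')| ≤ c n * (4 * r + 5) := by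
      have h5 := abs_sub_le d e (dist (if (x : X n) = G n p₀ then p₀ else F n x)
        (if (x' : X n) = G n p₀ then p₀ else F n x'))
      have h6 : |e - dist (if (x : X n) = G n p₀ then p₀ else F n x)
          (if (x' : X n) = G n p₀ then p₀ else F n x')| ≤ c n + c n := by
        rw [abs_sub_comm]; linarith
      linarith
    have hfin2 : c n * (4 * r + 5) < ε := by
      have : c n * (4 * r + 5) < (ε / (4 * r + 5)) * (4 * r + 5) := by
        apply mul_lt_mul_of_pos_right hc2; linarith
      rw [div_mul_cancel₀] at this
      · exact this
      · positivity
    exact lt_of_le_of_lt habs hfin2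
  · intro y hy
    have hy' : dist y p₀ < r - ε := Metric.mem_ball.mp hy
    have hrε : 0 < r - ε := lt_of_le_of_lt dist_nonneg hy'
    have hmem : G n y ∈ Metric.ball ((fun k => G k p₀) n) r := by
      have h7 := (hG y p₀).2
      have h8 : dist (G n y) (G n p₀) ≤ (1 + c n) * dist y p₀ + c n := h7
      have h9 : (1 + c n) * dist y p₀ + c n < r := by
        have h10 : dist y p₀ ≥ 0 := dist_nonneg
        have h11 : c n * (r + 1) < ε := by
          have : c n * (r + 1) < (ε / (r + 1)) * (r + 1) :=
            mul_lt_mul_of_pos_right hc3 (by linarith)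
          rwa [div_mul_cancel₀ _ (by linarith : (r : ℝ) + 1 ≠ 0)] at this
        nlinarith
      exact Metric.mem_ball.mpr (lt_of_le_of_lt h8 h9)
    refine ⟨⟨G n y, hmem⟩, ?_⟩
    by_cases h : G n y = G n p₀
    · show dist y (if (G n y : X n) = G n p₀ then p₀ else F n (G n y)) < ε
      rw [if_pos h]
      have h12 : dist (F n (G n y)) y ≤ c n := hfg y
      have h13 : dist (F n (G n p₀)) p₀ ≤ c n := hfg p₀
      have h14 : dist y p₀ ≤ dist y (F n (G n y)) + dist (F n (G n y)) p₀ :=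
        dist_triangle _ _ _
      rw [h] at h12
      calc dist y p₀ ≤ dist y (F n (G n p₀)) + dist (F n (G n p₀)) p₀ := dist_triangle _ _ _
        _ ≤ c n + c n := by rw [dist_comm] at h12; linarith
        _ < ε := by linarith
    · show dist y (if (G n y : X n) = G n p₀ then p₀ else F n (G n y)) < ε
      rw [if_neg h, dist_comm]
      exact lt_of_le_of_lt (hfg y) (by linarith)
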